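/- Let (G, G_•) be a filtered group with G_0 = G_1 = G and deg(G_•) = k. Then G together with the cube sets C^n(G_•) is a k-step nilspace: it satisfies the composition axiom, the ergodicity axiom, every corner has a completion, and every (k+1)-corner has a unique completion. -/

import Mathlib

open Finset

/-- Embedding of the discrete cube `{0,1}^n` into `ℤ^n`. -/
def cubeEmb {n : ℕ} (v : Fin n → Bool) : Fin n → ℤ := fun i => if v i then 1 else 0

/-- A discrete-cube morphism: the restriction to `{0,1}^m` of an affine
homomorphism `ℤ^m → ℤ^n`. -/
def IsCubeMorphism {m n : ℕ} (φ : (Fin m → Bool) → (Fin n → Bool)) : Prop :=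
  ∃ (M : (Fin m → ℤ) →+ (Fin n → ℤ)) (t : Fin n → ℤ),
    ∀ v : Fin m → Bool, cubeEmb (φ v) = M (cubeEmb v) + t

/-- A face of `{0,1}^n` of codimension `c`: fix `c` coordinates. -/
def IsFaceOfCodim {n : ℕ} (F : Set (Fin n → Bool)) (c : ℕ) : Prop :=
  ∃ (I : Finset (Fin n)) (x : Fin n → Bool), I.card = c ∧
    F = {v : Fin n → Bool | ∀ i ∈ I, v i = x i}

/-- An `m`-face map into `{0,1}^n`: an injective cube morphism whose image is
an `m`-dimensional face. -/
def IsFaceMap {m n : ℕ} (φ : (Fin m → Bool) → (Fin n → Bool)) : Prop :=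
  IsCubeMorphism φ ∧ Function.Injective φ ∧ IsFaceOfCodim (Set.range φ) (n - m)

/-- The number of coordinates of `v` equal to `1`. -/
def weight {n : ℕ} (v : Fin n → Bool) : ℕ := (Finset.univ.filter fun i => v i = true).card

/-- A (pre)filtration on a group: a decreasing chain of subgroups with
`[G_i, G_j] ⊆ G_{i+j}`. -/
def IsGrpFiltration {G : Type*} [Group G] (Gf : ℕ → Subgroup G) : Prop :=
  (∀ i, Gf (i + 1) ≤ Gf i) ∧
  (∀ i j : ℕ, ∀ x ∈ Gf i, ∀ y ∈ Gf j, x⁻¹ * y⁻¹ * x * y ∈ Gf (i + j))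

open Classical in
/-- The face-group element `g^F`: equal to `g` on `F` and to the identity elsewhere. -/
noncomputable def faceEl {G : Type*} [Group G] {n : ℕ} (F : Set (Fin n → Bool)) (g : G) :
    (Fin n → Bool) → G :=
  fun v => if v ∈ F then g else 1

/-- The Host–Kra cube group `C^n(G_•)`: the subgroup of `G^{{0,1}^n}` generated by
the face groups. -/
noncomputable def hkCubes {G : Type*} [Group G] (Gf : ℕ → Subgroup G) (n : ℕ) :
    Subgroup ((Fin n → Bool) → G) :=
  Subgroup.closure { f | ∃ (c : ℕ) (F : Set (Fin n → Bool)) (g : G),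
    IsFaceOfCodim F c ∧ g ∈ Gf c ∧ f = faceEl F g }

/-- Restriction of a map on `{0,1}^{n+1}` to the lower face `{v : v_j = 0}`,
viewed as a map on `{0,1}^n`. -/
def lowerFaceRestr {X : Type*} {n : ℕ} (q : (Fin (n + 1) → Bool) → X) (j : Fin (n + 1)) :
    (Fin n → Bool) → X :=
  fun v => q (j.insertNth false v)

/-- An `(n+1)`-corner: every restriction to an `n`-face containing `0^{n+1}` is a cube. -/
def IsNSCorner {X : Type*} (C : ∀ n, ((Fin n → Bool) → X) → Prop) (n : ℕ)
    (q' : (Fin (n + 1) → Bool) → X) : Prop :=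
  ∀ j : Fin (n + 1), C n (lowerFaceRestr q' j)

/-- `q` is a completion of the corner `q'`. -/
def IsNSCompletion {X : Type*} (C : ∀ n, ((Fin n → Bool) → X) → Prop) (n : ℕ)
    (q' q : (Fin (n + 1) → Bool) → X) : Prop :=
  C (n + 1) q ∧ ∀ v : Fin (n + 1) → Bool, v ≠ (fun _ => true) → q v = q' v

/-- The nilspace axioms: composition, ergodicity and corner completion. -/
def IsNilspace {X : Type*} (C : ∀ n, ((Fin n → Bool) → X) → Prop) : Prop :=
  (∀ (m n : ℕ) (φ : (Fin m → Bool) → (Fin n → Bool)), IsCubeMorphism φ →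
      ∀ q, C n q → C m (q ∘ φ)) ∧
  (∀ q : (Fin 1 → Bool) → X, C 1 q) ∧
  (∀ n (q' : (Fin (n + 1) → Bool) → X), IsNSCorner C n q' → ∃ q, IsNSCompletion C n q' q)

/-- A `k`-step nilspace: a nilspace in which every `(k+1)`-corner has a unique
completion. -/
def IsKStepNilspace {X : Type*} (C : ∀ n, ((Fin n → Bool) → X) → Prop) (k : ℕ) : Prop :=
  IsNilspace C ∧
  ∀ q' : (Fin (k + 1) → Bool) → X, IsNSCorner C k q' → ∃! q, IsNSCompletion C k q' q

/-- The Gray-code alternating product `σ_n`. -/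
def graySigma {G : Type*} [Group G] : (n : ℕ) → ((Fin n → Bool) → G) → G
  | 0, g => g (fun i => i.elim0)
  | n + 1, g => (graySigma n (fun v => g (Fin.snoc v true)))⁻¹ *
      graySigma n (fun v => g (Fin.snoc v false))

/-- The difference operator `∂_h g (x) = g(x)⁻¹ g(xh)`. -/
def mulDiff {H G : Type*} [Group H] [Group G] (h : H) (g : H → G) : H → G :=
  fun x => (g x)⁻¹ * g (x * h)

/-- `g : H → G` is a polynomial map adapted to the filtrations `H_•, G_•`. -/
def IsPolyMap {H G : Type*} [Group H] [Group G] (Hf : ℕ → Subgroup H)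
    (Gf : ℕ → Subgroup G) (g : H → G) : Prop :=
  ∀ (n : ℕ) (d : Fin n → ℕ) (h : Fin n → H), (∀ j, h j ∈ Hf (d j)) →
    ∀ x : H, ((List.ofFn h).foldr mulDiff g) x ∈ Gf (∑ j, d j)

/-- The `k`-arrow `⟨q_0, q_1⟩_k : {0,1}^{n+k} → X`. -/
def arrowMap {X : Type*} {n k : ℕ} (q0 q1 : (Fin n → Bool) → X) :
    (Fin (n + k) → Bool) → X :=
  fun v =>
    if ∀ j : Fin k, v (Fin.natAdd n j) = true
    then q1 (fun i => v (Fin.castAdd k i))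
    else q0 (fun i => v (Fin.castAdd k i))
section Aux
variable {G : Type*} [Group G]
open Classical

/-- shifted filtration -/
def shiftF {G : Type*} [Group G] (Gf : ℕ → Subgroup G) : ℕ → Subgroup G := fun i => Gf (i + 1)

lemma IsGrpFiltration.antitone {Gf : ℕ → Subgroup G} (h : IsGrpFiltration Gf) {i j : ℕ}
    (hij : i ≤ j) : Gf j ≤ Gf i := by
  induction hij with
  | refl => exact le_rfl
  | step h' ih => exact le_trans (h.1 _) ih

lemma IsGrpFiltration.shift {Gf : ℕ → Subgroup G} (h : IsGrpFiltration Gf) :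
    IsGrpFiltration (shiftF Gf) := by
  refine ⟨fun i => h.antitone (by omega : i + 1 ≤ i + 1 + 1), fun i j x hx y hy => ?_⟩
  exact h.antitone (by omega) (h.2 (i + 1) (j + 1) x hx y hy)

lemma faceEl_apply {n : ℕ} (F : Set (Fin n → Bool)) (g : G) (v : Fin n → Bool) :
    faceEl F g v = if v ∈ F then g else 1 := by
  classical
  simp [faceEl]

lemma faceEl_mul {n : ℕ} (F : Set (Fin n → Bool)) (g h : G) :
    faceEl F g * faceEl F h = faceEl F (g * h) := by
  classical
  funext v
  by_cases hv : v ∈ F <;> simp [faceEl_apply, hv, Pi.mul_apply]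

lemma faceEl_one {n : ℕ} (F : Set (Fin n → Bool)) : faceEl F (1 : G) = 1 := by
  classical
  funext v
  by_cases hv : v ∈ F <;> simp [faceEl_apply, hv]

lemma faceEl_empty {n : ℕ} (g : G) : faceEl (∅ : Set (Fin n → Bool)) g = 1 := by
  funext v; simp [faceEl_apply]

lemma faceEl_inv {n : ℕ} (F : Set (Fin n → Bool)) (g : G) :
    (faceEl F g)⁻¹ = faceEl F g⁻¹ := by
  classical
  funext v
  by_cases hv : v ∈ F <;> simp [faceEl_apply, hv, Pi.inv_apply]

lemma faceEl_mem {Gf : ℕ → Subgroup G} {n c : ℕ} {F : Set (Fin n → Bool)} {g : G}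
    (hF : IsFaceOfCodim F c) (hg : g ∈ Gf c) : faceEl F g ∈ hkCubes Gf n :=
  Subgroup.subset_closure ⟨c, F, g, hF, hg, rfl⟩

lemma face_nonempty {n c : ℕ} {F : Set (Fin n → Bool)} (hF : IsFaceOfCodim F c) :
    F.Nonempty := by
  obtain ⟨I, x, -, rfl⟩ := hF
  exact ⟨x, fun i _ => rfl⟩

lemma face_inter {n c c' : ℕ} {F F' : Set (Fin n → Bool)}
    (hF : IsFaceOfCodim F c) (hF' : IsFaceOfCodim F' c') :
    F ∩ F' = ∅ ∨ ∃ c'' ≤ c + c', IsFaceOfCodim (F ∩ F') c'' := by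
  classical
  obtain ⟨I, x, hI, rfl⟩ := hF
  obtain ⟨I', x', hI', rfl⟩ := hF'
  by_cases hcons : ∀ i ∈ I ∩ I', x i = x' i
  · right
    refine ⟨(I ∪ I').card, by
      calc (I ∪ I').card ≤ I.card + I'.card := Finset.card_union_le _ _
      _ = c + c' := by rw [hI, hI'], (I ∪ I'), fun i => if i ∈ I then x i else x' i, rfl, ?_⟩
    ext v
    simp only [Set.mem_inter_iff, Set.mem_setOf_eq, Finset.mem_union]
    constructor
    · rintro ⟨h1, h2⟩ i hi
      by_cases hiI : i ∈ I
      · simp [hiI, h1 i hiI]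
      · rcases hi with hi | hi
        · exact absurd hi hiI
        · simp [hiI, h2 i hi]
    · intro h
      constructor
      · intro i hi
        have := h i (Or.inl hi)
        simpa [hi] using this
      · intro i hi
        have := h i (Or.inr hi)
        by_cases hiI : i ∈ I
        · rw [← hcons i (Finset.mem_inter.2 ⟨hiI, hi⟩)]
          simpa [hiI] using this
        · simpa [hiI] using this
  · left
    push_neg at hcons
    obtain ⟨i, hi, hne⟩ := hcons
    rw [Finset.mem_inter] at hi
    ext v
    simp only [Set.mem_inter_iff, Set.mem_setOf_eq, Set.mem_empty_iff_false, iff_false]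
    rintro ⟨h1, h2⟩
    exact hne ((h1 i hi.1).symm.trans (h2 i hi.2))

lemma faceEl_inter_mem {Gf : ℕ → Subgroup G} (hanti : ∀ {i j : ℕ}, i ≤ j → Gf j ≤ Gf i)
    {n c c' : ℕ} {F F' : Set (Fin n → Bool)} {g : G}
    (hF : IsFaceOfCodim F c) (hF' : IsFaceOfCodim F' c') (hg : g ∈ Gf (c + c')) :
    faceEl (F ∩ F') g ∈ hkCubes Gf n := by
  rcases face_inter hF hF' with h | ⟨c'', hle, hface⟩
  · rw [h, faceEl_empty]; exact one_mem _
  · exact faceEl_mem hface (hanti hle hg)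

end Aux
section Aux2
variable {G : Type*} [Group G]
open Classical

/-- Precomposition as a group hom. -/
def precompHom {X Y : Type*} (φ : X → Y) : (Y → G) →* (X → G) where
  toFun q := q ∘ φ
  map_one' := rfl
  map_mul' _ _ := rfl

lemma conj_gen_mem {Gf : ℕ → Subgroup G} (hGf : IsGrpFiltration Gf) {n c' : ℕ}
    {F' : Set (Fin n → Bool)} {g' : G} (hF' : IsFaceOfCodim F' c') (hg' : g' ∈ Gf c')
    {b : (Fin n → Bool) → G} (hb : b ∈ hkCubes (shiftF Gf) n) :
    faceEl F' g' * b * (faceEl F' g')⁻¹ ∈ hkCubes (shiftF Gf) n := by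
  set a := faceEl F' g' with ha
  have : hkCubes (shiftF Gf) n ≤
      Subgroup.comap ((MulAut.conj a).toMonoidHom) (hkCubes (shiftF Gf) n) := by
    apply Subgroup.closure_le _ |>.2
    rintro f ⟨c, F, g, hF, hg, rfl⟩
    simp only [Subgroup.coe_comap, Set.mem_preimage, SetLike.mem_coe, MulEquiv.coe_toMonoidHom,
      MulAut.conj_apply]
    have key : a * faceEl F g * a⁻¹ = faceEl F g * faceEl (F ∩ F') (g⁻¹ * g' * g * g'⁻¹) := by
      funext v
      by_cases hv : v ∈ F <;> by_cases hv' : v ∈ F' <;>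
        simp [ha, faceEl_apply, hv, hv', Pi.mul_apply, Pi.inv_apply, mul_assoc]
    rw [key]
    refine mul_mem (faceEl_mem hF hg) ?_
    have hcomm : g⁻¹ * g' * g * g'⁻¹ ∈ Gf (c + 1 + c') := by
      have := hGf.2 (c + 1) c' g hg (g'⁻¹) (inv_mem hg')
      simpa [mul_assoc] using this
    refine faceEl_inter_mem (fun {i j} hij => hGf.shift.antitone hij) hF hF' ?_
    show _ ∈ Gf (c + c' + 1)
    exact hGf.antitone (by omega) hcomm
  exact this hb

lemma conj_mem_shift {Gf : ℕ → Subgroup G} (hGf : IsGrpFiltration Gf) {n : ℕ}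
    {a b : (Fin n → Bool) → G} (ha : a ∈ hkCubes Gf n) (hb : b ∈ hkCubes (shiftF Gf) n) :
    a * b * a⁻¹ ∈ hkCubes (shiftF Gf) n := by
  have hnorm : hkCubes Gf n ≤ Subgroup.normalizer ((hkCubes (shiftF Gf) n : Set ((Fin n → Bool) → G))) := by
    apply Subgroup.closure_le _ |>.2
    rintro f ⟨c, F, g, hF, hg, rfl⟩
    rw [SetLike.mem_coe, Subgroup.mem_normalizer_iff]
    intro h
    constructor
    · intro hh
      exact conj_gen_mem hGf hF hg hh
    · intro hh
      have := conj_gen_mem hGf hF (inv_mem hg) hh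
      rw [← faceEl_inv] at this
      simpa [mul_assoc] using this
  have := (Subgroup.mem_normalizer_iff.1 (hnorm ha) b).1 hb
  exact this

end Aux2
section Aux3
variable {G : Type*} [Group G]
open Classical

/-- Restriction data of a face of the `(n+1)`-cube to the layer `v_last = b`. -/
lemma snoc_mem_face_iff {n : ℕ} (I : Finset (Fin (n + 1))) (x : Fin (n + 1) → Bool)
    (b : Bool) (w : Fin n → Bool) :
    (Fin.snoc w b ∈ {v : Fin (n + 1) → Bool | ∀ i ∈ I, v i = x i}) ↔
      ((Fin.last n ∈ I → x (Fin.last n) = b) ∧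
        ∀ i₀ ∈ Finset.univ.filter (fun i : Fin n => i.castSucc ∈ I), w i₀ = x i₀.castSucc) := by
  simp only [Set.mem_setOf_eq, Finset.mem_filter, Finset.mem_univ, true_and]
  constructor
  · intro h
    refine ⟨fun hl => by simpa [Fin.snoc_last] using (h _ hl).symm, fun i₀ hi₀ => ?_⟩
    have := h _ hi₀
    simpa [Fin.snoc_castSucc] using this
  · rintro ⟨hl, h0⟩ i hi
    rcases Fin.eq_castSucc_or_eq_last i with ⟨i₀, rfl⟩ | rfl
    · simpa [Fin.snoc_castSucc] using h0 i₀ hi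
    · simp [Fin.snoc_last, (hl hi).symm]

lemma filter_card_le {n : ℕ} (I : Finset (Fin (n + 1))) :
    (Finset.univ.filter (fun i : Fin n => i.castSucc ∈ I)).card + 
      (if Fin.last n ∈ I then 1 else 0) = I.card := by
  classical
  have himg : (Finset.univ.filter (fun i : Fin n => i.castSucc ∈ I)).image Fin.castSucc
      = I.erase (Fin.last n) := by
    ext i
    simp only [Finset.mem_image, Finset.mem_filter, Finset.mem_univ, true_and,
      Finset.mem_erase]
    constructor
    · rintro ⟨i₀, hi₀, rfl⟩
      exact ⟨(Fin.castSucc_lt_last i₀).ne, hi₀⟩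
    · rintro ⟨hne, hi⟩
      obtain ⟨i₀, rfl⟩ := Fin.exists_castSucc_eq.2 hne
      exact ⟨i₀, hi, rfl⟩
  have hcard : (Finset.univ.filter (fun i : Fin n => i.castSucc ∈ I)).card
      = (I.erase (Fin.last n)).card := by
    rw [← himg, Finset.card_image_of_injective _ (Fin.castSucc_injective n)]
  rw [hcard]
  by_cases hl : Fin.last n ∈ I
  · simp [hl, Finset.card_erase_of_mem hl]
    have : 1 ≤ I.card := Finset.card_pos.2 ⟨_, hl⟩
    omega
  · simp [hl, Finset.erase_eq_of_notMem hl]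

/-- The "doubling" extension hom. -/
def extHom {G : Type*} [Group G] (n : ℕ) : ((Fin n → Bool) → G) →* ((Fin (n + 1) → Bool) → G) :=
  precompHom Fin.init

/-- The "upper layer" extension hom. -/
def upHom {G : Type*} [Group G] (n : ℕ) : ((Fin n → Bool) → G) →* ((Fin (n + 1) → Bool) → G) where
  toFun r := fun v => if v (Fin.last n) = true then r (Fin.init v) else 1
  map_one' := by funext v; by_cases h : v (Fin.last n) = true <;> simp [h]
  map_mul' r r' := by
    funext v; by_cases h : v (Fin.last n) = true <;> simp [h, Pi.mul_apply]

lemma extHom_mem {Gf : ℕ → Subgroup G} {n : ℕ} {q : (Fin n → Bool) → G}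
    (hq : q ∈ hkCubes Gf n) : extHom n q ∈ hkCubes Gf (n + 1) := by
  revert hq
  have : hkCubes Gf n ≤ Subgroup.comap (extHom (G := G) n) (hkCubes Gf (n + 1)) := by
    apply Subgroup.closure_le _ |>.2
    rintro f ⟨c, F, g, ⟨I₀, x₀, hcard, rfl⟩, hg, rfl⟩
    simp only [Subgroup.coe_comap, Set.mem_preimage, SetLike.mem_coe]
    have key : extHom n (faceEl {v | ∀ i ∈ I₀, v i = x₀ i} g) =
        faceEl (Fin.init ⁻¹' {v | ∀ i ∈ I₀, v i = x₀ i}) g := rfl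
    have hset : (Fin.init ⁻¹' {v | ∀ i ∈ I₀, v i = x₀ i} : Set (Fin (n+1) → Bool)) =
        {v : Fin (n+1) → Bool |
          ∀ i ∈ I₀.image Fin.castSucc, v i = (Fin.snoc x₀ false : Fin (n+1) → Bool) i} := by
      ext v
      simp only [Set.mem_preimage, Set.mem_setOf_eq, Finset.forall_mem_image, Fin.snoc_castSucc]
      rfl
    rw [key, hset]
    refine faceEl_mem ⟨I₀.image Fin.castSucc, (Fin.snoc x₀ false : Fin (n+1) → Bool), ?_, rfl⟩ hg
    rw [Finset.card_image_of_injective _ (Fin.castSucc_injective n), hcard]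
  intro hq; exact this hq

lemma upHom_mem {Gf : ℕ → Subgroup G} {n : ℕ} {r : (Fin n → Bool) → G}
    (hr : r ∈ hkCubes (shiftF Gf) n) : upHom n r ∈ hkCubes Gf (n + 1) := by
  revert hr
  have : hkCubes (shiftF Gf) n ≤ Subgroup.comap (upHom (G := G) n) (hkCubes Gf (n + 1)) := by
    apply Subgroup.closure_le _ |>.2
    rintro f ⟨c, F, g, ⟨I₀, x₀, hcard, rfl⟩, hg, rfl⟩
    simp only [Subgroup.coe_comap, Set.mem_preimage, SetLike.mem_coe]
    have key : upHom n (faceEl {v | ∀ i ∈ I₀, v i = x₀ i} g) =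
        faceEl {v : Fin (n+1) → Bool |
          v (Fin.last n) = true ∧ Fin.init v ∈ {v | ∀ i ∈ I₀, v i = x₀ i}} g := by
      funext v
      show (if v (Fin.last n) = true then faceEl _ g (Fin.init v) else 1) = _
      rw [faceEl_apply, faceEl_apply]
      by_cases hv : v (Fin.last n) = true <;>
        by_cases hs : ∀ i ∈ I₀, Fin.init v i = x₀ i <;>
        simp [hv, hs, Set.mem_setOf_eq]
    have hset : {v : Fin (n+1) → Bool |
          v (Fin.last n) = true ∧ Fin.init v ∈ {v | ∀ i ∈ I₀, v i = x₀ i}} =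
        {v : Fin (n+1) → Bool | ∀ i ∈ insert (Fin.last n) (I₀.image Fin.castSucc),
          v i = (Fin.snoc x₀ true : Fin (n+1) → Bool) i} := by
      ext v
      simp only [Set.mem_setOf_eq, Finset.forall_mem_insert, Finset.forall_mem_image,
        Fin.snoc_castSucc, Fin.snoc_last]
      rfl
    rw [key, hset]
    refine faceEl_mem ⟨insert (Fin.last n) (I₀.image Fin.castSucc),
      (Fin.snoc x₀ true : Fin (n+1) → Bool), ?_, rfl⟩ hg
    rw [Finset.card_insert_of_notMem, Finset.card_image_of_injective _
      (Fin.castSucc_injective n), hcard]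
    simp only [Finset.mem_image]
    rintro ⟨i₀, -, hi₀⟩
    exact (Fin.castSucc_lt_last i₀).ne hi₀
  intro hr; exact this hr

end Aux3
section Aux4
variable {G : Type*} [Group G]
open Classical

/-- The key recursive description of the Host–Kra cube groups. -/
lemma hk_succ_iff {Gf : ℕ → Subgroup G} (hGf : IsGrpFiltration Gf) {n : ℕ}
    (p : (Fin (n + 1) → Bool) → G) :
    p ∈ hkCubes Gf (n + 1) ↔
      ((fun w => p (Fin.snoc w false)) ∈ hkCubes Gf n ∧
        (fun w => (p (Fin.snoc w false))⁻¹ * p (Fin.snoc w true)) ∈ hkCubes (shiftF Gf) n) := by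
  have lowH : ((Fin (n+1) → Bool) → G) →* ((Fin n → Bool) → G) :=
    precompHom (fun w : Fin n → Bool => Fin.snoc w false)
  constructor
  · -- forward: closure is contained in the subgroup D
    intro hp
    let low : ((Fin (n+1) → Bool) → G) → ((Fin n → Bool) → G) :=
      fun p => fun w => p (Fin.snoc w false)
    let high : ((Fin (n+1) → Bool) → G) → ((Fin n → Bool) → G) :=
      fun p => fun w => p (Fin.snoc w true)
    have lowmul : ∀ p q, low (p * q) = low p * low q := fun _ _ => rfl
    have highmul : ∀ p q, high (p * q) = high p * high q := fun _ _ => rfl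
    let D : Subgroup ((Fin (n+1) → Bool) → G) :=
      { carrier := {p | low p ∈ hkCubes Gf n ∧ (low p)⁻¹ * high p ∈ hkCubes (shiftF Gf) n}
        one_mem' := by
          constructor
          · exact one_mem _
          · show (1:(Fin n → Bool) → G)⁻¹ * 1 ∈ _
            simpa using one_mem _
        mul_mem' := by
          rintro p q ⟨hp1, hp2⟩ ⟨hq1, hq2⟩
          refine ⟨by rw [lowmul]; exact mul_mem hp1 hq1, ?_⟩
          have hid : (low (p * q))⁻¹ * high (p * q) =
              ((low q)⁻¹ * ((low p)⁻¹ * high p) * ((low q)⁻¹)⁻¹) * ((low q)⁻¹ * high q) := by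
            rw [lowmul, highmul]
            group
          rw [hid]
          exact mul_mem (conj_mem_shift hGf (inv_mem hq1) hp2) hq2
        inv_mem' := by
          rintro p ⟨hp1, hp2⟩
          refine ⟨inv_mem hp1, ?_⟩
          have hid : (low p⁻¹)⁻¹ * high p⁻¹ =
              (low p) * ((low p)⁻¹ * high p)⁻¹ * (low p)⁻¹ := by
            show (low p)⁻¹⁻¹ * (high p)⁻¹ = _
            group
          rw [hid]
          exact conj_mem_shift hGf hp1 (inv_mem hp2) }
    suffices h : hkCubes Gf (n + 1) ≤ D from h hp
    apply Subgroup.closure_le _ |>.2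
    rintro f ⟨c, F, g, ⟨I, x, hcard, rfl⟩, hg, rfl⟩
    set I₀ := Finset.univ.filter (fun i : Fin n => i.castSucc ∈ I) with hI₀
    have hface₀ : IsFaceOfCodim {w : Fin n → Bool | ∀ i₀ ∈ I₀, w i₀ = x i₀.castSucc} I₀.card :=
      ⟨I₀, fun i₀ => x i₀.castSucc, rfl, rfl⟩
    have hlow : ∀ b : Bool, (Fin.last n ∈ I → x (Fin.last n) = b) →
        (fun w => faceEl {v | ∀ i ∈ I, v i = x i} g (Fin.snoc w b)) =
          faceEl {w : Fin n → Bool | ∀ i₀ ∈ I₀, w i₀ = x i₀.castSucc} g := by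
      intro b hb
      funext w
      rw [faceEl_apply, faceEl_apply]
      simp only [Set.mem_setOf_eq]
      by_cases hw : ∀ i₀ ∈ I₀, w i₀ = x i₀.castSucc
      · rw [if_pos (show ∀ i ∈ I, (Fin.snoc w b : Fin (n+1) → Bool) i = x i from (snoc_mem_face_iff I x b w).2 ⟨hb, hw⟩), if_pos hw]
      · rw [if_neg, if_neg hw]
        intro hmem
        exact hw ((snoc_mem_face_iff I x b w).1 hmem).2
    have hlow' : ∀ b : Bool, (Fin.last n ∈ I ∧ x (Fin.last n) ≠ b) →
        (fun w => faceEl {v | ∀ i ∈ I, v i = x i} g (Fin.snoc w b)) = 1 := by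
      rintro b ⟨hl, hb⟩
      funext w
      rw [faceEl_apply, Pi.one_apply, if_neg]
      intro hmem
      exact hb (((snoc_mem_face_iff I x b w).1 hmem).1 hl)
    have hcard' := filter_card_le I
    rw [← hI₀] at hcard'
    show low (faceEl _ g) ∈ hkCubes Gf n ∧ _ ∈ hkCubes (shiftF Gf) n
    by_cases hl : Fin.last n ∈ I
    · have hc1 : I₀.card + 1 = c := by rw [← hcard]; simpa [hl] using hcard'
      cases hx : x (Fin.last n) with
      | false =>
        have e0 : low (faceEl {v | ∀ i ∈ I, v i = x i} g) =
            faceEl {w : Fin n → Bool | ∀ i₀ ∈ I₀, w i₀ = x i₀.castSucc} g :=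
          hlow false (fun _ => hx)
        have e1 : high (faceEl {v | ∀ i ∈ I, v i = x i} g) = 1 :=
          hlow' true ⟨hl, by simp [hx]⟩
        constructor
        · rw [e0]
          exact faceEl_mem hface₀ (hGf.antitone (by omega) hg)
        · show (low _)⁻¹ * high _ ∈ _
          rw [e0, e1, mul_one, faceEl_inv]
          exact faceEl_mem hface₀ (show g⁻¹ ∈ Gf (I₀.card + 1) by rw [hc1]; exact inv_mem hg)
      | true =>
        have e0 : low (faceEl {v | ∀ i ∈ I, v i = x i} g) = 1 :=
          hlow' false ⟨hl, by simp [hx]⟩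
        have e1 : high (faceEl {v | ∀ i ∈ I, v i = x i} g) =
            faceEl {w : Fin n → Bool | ∀ i₀ ∈ I₀, w i₀ = x i₀.castSucc} g :=
          hlow true (fun _ => hx)
        constructor
        · rw [e0]; exact one_mem _
        · show (low _)⁻¹ * high _ ∈ _
          rw [e0, e1]
          simp only [inv_one, one_mul]
          exact faceEl_mem hface₀ (show g ∈ Gf (I₀.card + 1) by rw [hc1]; exact hg)
    · have hc1 : I₀.card = c := by rw [← hcard]; simpa [hl] using hcard'
      have e0 : low (faceEl {v | ∀ i ∈ I, v i = x i} g) =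
          faceEl {w : Fin n → Bool | ∀ i₀ ∈ I₀, w i₀ = x i₀.castSucc} g :=
        hlow false (fun h => absurd h hl)
      have e1 : high (faceEl {v | ∀ i ∈ I, v i = x i} g) =
          faceEl {w : Fin n → Bool | ∀ i₀ ∈ I₀, w i₀ = x i₀.castSucc} g :=
        hlow true (fun h => absurd h hl)
      constructor
      · rw [e0]; exact faceEl_mem hface₀ (hc1 ▸ hg)
      · show (low _)⁻¹ * high _ ∈ _
        rw [e0, e1]
        simp only [inv_mul_cancel]
        exact one_mem _
  · -- backward
    rintro ⟨h1, h2⟩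
    have key : p = extHom n (fun w => p (Fin.snoc w false)) *
        upHom n (fun w => (p (Fin.snoc w false))⁻¹ * p (Fin.snoc w true)) := by
      funext v
      show p v = p (Fin.snoc (Fin.init v) false) *
        (if v (Fin.last n) = true then
          (p (Fin.snoc (Fin.init v) false))⁻¹ * p (Fin.snoc (Fin.init v) true) else 1)
      by_cases hv : v (Fin.last n) = true
      · rw [if_pos hv]
        have : Fin.snoc (Fin.init v) true = v := by
          rw [← hv]; exact Fin.snoc_init_self v
        rw [this]
        group
      · rw [if_neg hv, mul_one]
        have hfalse : v (Fin.last n) = false := by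
          cases h : v (Fin.last n)
          · rfl
          · exact absurd h hv
        have : Fin.snoc (Fin.init v) false = v := by
          rw [← hfalse]; exact Fin.snoc_init_self v
        rw [this]
    rw [key]
    exact mul_mem (extHom_mem h1) (upHom_mem h2)

end Aux4
section Aux5
variable {G : Type*} [Group G]
open Classical

lemma hk_eval_mem {Gf : ℕ → Subgroup G} (hGf : IsGrpFiltration Gf) {n : ℕ}
    {q : (Fin n → Bool) → G} (hq : q ∈ hkCubes Gf n) (v : Fin n → Bool) :
    q v ∈ Gf 0 := by
  revert hq
  have : hkCubes Gf n ≤ Subgroup.comap (Pi.evalMonoidHom (fun _ => G) v) (Gf 0) := by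
    apply Subgroup.closure_le _ |>.2
    rintro f ⟨c, F, g, hF, hg, rfl⟩
    simp only [Subgroup.coe_comap, Set.mem_preimage, SetLike.mem_coe, Pi.evalMonoidHom_apply]
    rw [faceEl_apply]
    by_cases hv : v ∈ F
    · rw [if_pos hv]; exact hGf.antitone (Nat.zero_le c) hg
    · rw [if_neg hv]; exact one_mem _
  intro hq; exact this hq

lemma snoc_true_eq_top_iff {n : ℕ} (w : Fin n → Bool) :
    (Fin.snoc w true : Fin (n+1) → Bool) = (fun _ => true) ↔ w = (fun _ => true) := by
  constructor
  · intro h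
    funext i₀
    have := congrFun h (Fin.castSucc i₀)
    simpa [Fin.snoc_castSucc] using this
  · intro h
    subst h
    funext i
    refine Fin.lastCases ?_ (fun i₀ => ?_) i
    · simp [Fin.snoc_last]
    · simp [Fin.snoc_castSucc]

lemma hk_top_support (n : ℕ) : ∀ (Gf : ℕ → Subgroup G), IsGrpFiltration Gf →
    ∀ {e : (Fin n → Bool) → G}, e ∈ hkCubes Gf n →
    (∀ v, v ≠ (fun _ => true) → e v = 1) → e (fun _ => true) ∈ Gf n := by
  induction n with
  | zero => intro Gf hGf e he _; exact hk_eval_mem hGf he _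
  | succ n ih =>
    intro Gf hGf e he hsupp
    obtain ⟨h1, h2⟩ := (hk_succ_iff hGf e).1 he
    have hlow : ∀ w, e (Fin.snoc w false) = 1 := by
      intro w
      refine hsupp _ (fun h => ?_)
      have := congrFun h (Fin.last n)
      simp [Fin.snoc_last] at this
    have key : (fun w => (e (Fin.snoc w false))⁻¹ * e (Fin.snoc w true)) =
        (fun w => e (Fin.snoc w true)) := by
      funext w
      rw [hlow w, inv_one, one_mul]
    rw [key] at h2
    have hsupp' : ∀ w : Fin n → Bool, w ≠ (fun _ => true) → e (Fin.snoc w true) = 1 := by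
      intro w hw
      exact hsupp _ (fun h => hw ((snoc_true_eq_top_iff w).1 h))
    have := ih (shiftF Gf) hGf.shift h2 hsupp'
    have htop : (Fin.snoc (fun _ => true) true : Fin (n+1) → Bool) = (fun _ => true) :=
      (snoc_true_eq_top_iff _).2 rfl
    rw [htop] at this
    exact this

lemma snoc_insertNth {n : ℕ} (j : Fin (n + 1)) (b a : Bool) (w : Fin n → Bool) :
    (Fin.snoc (Fin.insertNth j b w) a : Fin (n + 2) → Bool) =
      Fin.insertNth (Fin.castSucc j) b (Fin.snoc w a) := by
  funext i
  refine Fin.lastCases ?_ (fun i' => ?_) i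
  · rw [Fin.snoc_last]
    have h1 : Fin.last (n + 1) = (Fin.castSucc j).succAbove (Fin.last n) := by
      rw [Fin.succAbove_of_le_castSucc _ _ (Fin.castSucc_le_castSucc_iff.2 (Fin.le_last j))]
      exact (Fin.succ_last n).symm
    rw [h1, Fin.insertNth_apply_succAbove, Fin.snoc_last]
  · rw [Fin.snoc_castSucc]
    refine Fin.succAboveCases j ?_ (fun l => ?_) i'
    · rw [Fin.insertNth_apply_same, Fin.insertNth_apply_same]
    · rw [Fin.insertNth_apply_succAbove, ← Fin.castSucc_succAbove_castSucc,
        Fin.insertNth_apply_succAbove, Fin.snoc_castSucc]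

lemma hk_completion (n : ℕ) : ∀ (Gf : ℕ → Subgroup G), IsGrpFiltration Gf →
    ∀ (q' : (Fin (n + 1) → Bool) → G),
    (∀ j : Fin (n + 1), lowerFaceRestr q' j ∈ hkCubes Gf n) →
    ∃ q ∈ hkCubes Gf (n + 1), ∀ v, v ≠ (fun _ => true) → q v = q' v := by
  induction n with
  | zero =>
    intro Gf hGf q' hq'
    refine ⟨fun _ => q' (fun _ => false), ?_, ?_⟩
    · rw [hk_succ_iff hGf]
      constructor
      · have h00 : (fun w : Fin 0 → Bool => q' (fun _ => false)) = lowerFaceRestr q' 0 := by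
          funext w
          show q' (fun _ => false) = q' (Fin.insertNth 0 false w)
          have : (Fin.insertNth (0 : Fin 1) false w) = (fun _ => false) := by
            funext i
            rw [Fin.eq_zero i]
            exact Fin.insertNth_apply_same (α := fun _ => Bool) 0 false w
          rw [this]
        rw [h00]
        exact hq' 0
      · have h01 : (fun w : Fin 0 → Bool =>
            (q' (fun _ => false))⁻¹ * q' (fun _ => false)) = (1 : (Fin 0 → Bool) → G) := by
          funext w; simp
        rw [h01]
        exact one_mem _
    · intro v hv
      have hv0 : v = (fun _ => false) := by
        funext i
        rw [Fin.eq_zero i]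
        cases h : v 0
        · rfl
        · exact absurd (funext fun j => by rw [Fin.eq_zero j]; exact h) hv
      show q' (fun _ => false) = q' v
      rw [hv0]
  | succ n ih =>
    intro Gf hGf q' hq'
    set q0 : (Fin (n + 1) → Bool) → G := fun w => q' (Fin.snoc w false) with hq0def
    have hq0 : q0 ∈ hkCubes Gf (n + 1) := by
      have hlf : q0 = lowerFaceRestr q' (Fin.last (n + 1)) := by
        funext w
        show q' (Fin.snoc w false) = q' (Fin.insertNth (Fin.last (n + 1)) false w)
        rw [Fin.insertNth_last']
      rw [hlf]
      exact hq' (Fin.last (n + 1))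
    set r' : (Fin (n + 1) → Bool) → G :=
      fun w => (q' (Fin.snoc w false))⁻¹ * q' (Fin.snoc w true) with hr'def
    have hcorner : ∀ j : Fin (n + 1), lowerFaceRestr r' j ∈ hkCubes (shiftF Gf) n := by
      intro j
      have hpj := (hk_succ_iff hGf (lowerFaceRestr q' (Fin.castSucc j))).1
        (hq' (Fin.castSucc j)) |>.2
      have heq : lowerFaceRestr r' j = fun w =>
          (lowerFaceRestr q' (Fin.castSucc j) (Fin.snoc w false))⁻¹ *
            lowerFaceRestr q' (Fin.castSucc j) (Fin.snoc w true) := by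
        funext w
        show (q' (Fin.snoc (Fin.insertNth j false w) false))⁻¹ *
            q' (Fin.snoc (Fin.insertNth j false w) true) =
          (q' (Fin.insertNth (Fin.castSucc j) false (Fin.snoc w false)))⁻¹ *
            q' (Fin.insertNth (Fin.castSucc j) false (Fin.snoc w true))
        rw [snoc_insertNth, snoc_insertNth]
      rw [heq]
      exact hpj
    obtain ⟨r, hr, hragree⟩ := ih (shiftF Gf) hGf.shift r' hcorner
    refine ⟨extHom (n + 1) q0 * upHom (n + 1) r,
      mul_mem (extHom_mem hq0) (upHom_mem hr), ?_⟩
    intro v hv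
    show q0 (Fin.init v) *
      (if v (Fin.last (n + 1)) = true then r (Fin.init v) else 1) = q' v
    by_cases hlast : v (Fin.last (n + 1)) = true
    · have hiv : Fin.init v ≠ (fun _ => true) := by
        intro h
        apply hv
        rw [← Fin.snoc_init_self v, h, hlast]
        exact (snoc_true_eq_top_iff _).2 rfl
      have hsn : (Fin.snoc (Fin.init v) true : Fin (n + 1 + 1) → Bool) = v := by
        rw [← hlast]; exact Fin.snoc_init_self v
      rw [if_pos hlast, hragree _ hiv]
      show q' (Fin.snoc (Fin.init v) false) *
        ((q' (Fin.snoc (Fin.init v) false))⁻¹ * q' (Fin.snoc (Fin.init v) true)) = q' v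
      conv_rhs => rw [← hsn]
      group
    · have hlast' : v (Fin.last (n + 1)) = false := by
        cases h : v (Fin.last (n + 1))
        · rfl
        · exact absurd h hlast
      have hsn : (Fin.snoc (Fin.init v) false : Fin (n + 1 + 1) → Bool) = v := by
        rw [← hlast']; exact Fin.snoc_init_self v
      rw [if_neg hlast, mul_one]
      show q' (Fin.snoc (Fin.init v) false) = q' v
      rw [hsn]

end Aux5
section Aux6
variable {G : Type*} [Group G]
open Classical

lemma cubeEmb_eq_sum {m : ℕ} (v : Fin m → Bool) :
    cubeEmb v = ∑ j : Fin m, (if v j then Pi.single j (1 : ℤ) else 0) := by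
  funext l
  rw [Finset.sum_apply]
  have : ∀ j : Fin m, ite (v j = true) (Pi.single j (1 : ℤ)) (0 : Fin m → ℤ) l =
      if j = l then (if v j then (1 : ℤ) else 0) else 0 := by
    intro j
    by_cases hj : j = l
    · subst hj; by_cases hv : v j <;> simp [hv]
    · by_cases hv : v j <;> simp [hv, Pi.single_apply, eq_comm, hj]
  rw [Finset.sum_congr rfl fun j _ => this j, Finset.sum_ite_eq' Finset.univ l]
  simp [cubeEmb]

lemma cube_morphism_coord {m n : ℕ} {φ : (Fin m → Bool) → (Fin n → Bool)}
    (h : IsCubeMorphism φ) (i : Fin n) :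
    (∀ v, φ v i = φ (fun _ => false) i) ∨
      ∃ j, (∀ v, φ v i = v j) ∨ (∀ v, φ v i = !(v j)) := by
  obtain ⟨M, t, hM⟩ := h
  set a : Fin m → ℤ := fun j => M (Pi.single j 1) i with ha
  have hval : ∀ v, (if φ v i then (1 : ℤ) else 0) =
      (∑ j : Fin m, if v j then a j else 0) + t i := by
    intro v
    have h1 : cubeEmb (φ v) i = M (cubeEmb v) i + t i := by
      rw [hM v]; rfl
    have h2 : M (cubeEmb v) = ∑ j : Fin m, (if v j then M (Pi.single j 1) else 0) := by
      rw [cubeEmb_eq_sum, map_sum]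
      refine Finset.sum_congr rfl fun j _ => ?_
      by_cases hv : v j <;> simp [hv]
    have h3 : M (cubeEmb v) i = ∑ j : Fin m, (if v j then a j else 0) := by
      rw [h2, Finset.sum_apply]
      refine Finset.sum_congr rfl fun j _ => ?_
      by_cases hv : v j <;> simp [hv, ha]
    rw [← h3, ← h1]; rfl
  have hv0 : (if φ (fun _ => false) i then (1 : ℤ) else 0) = t i := by
    have := hval (fun _ => false)
    simpa using this
  have hvj : ∀ j : Fin m, (if φ (fun l => decide (l = j)) i then (1 : ℤ) else 0)
      = a j + t i := by
    intro j
    have := hval (fun l => decide (l = j))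
    rw [this]
    congr 1
    have : ∀ l : Fin m, (if (decide (l = j) : Bool) then a l else 0) =
        if l = j then a l else 0 := by
      intro l
      by_cases hl : l = j <;> simp [hl]
    rw [Finset.sum_congr rfl fun l _ => this l, Finset.sum_ite_eq' Finset.univ j a]
    simp
  have hpair : ∀ j l : Fin m, j ≠ l →
      (if φ (fun p => decide (p = j ∨ p = l)) i then (1 : ℤ) else 0) = a j + a l + t i := by
    intro j l hjl
    have := hval (fun p => decide (p = j ∨ p = l))
    rw [this]
    congr 1
    have hsplit : ∀ p : Fin m, (if (decide (p = j ∨ p = l) : Bool) then a p else 0) =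
        (if p = j then a p else 0) + (if p = l then a p else 0) := by
      intro p
      by_cases h1 : p = j <;> by_cases h2 : p = l
      · exact absurd (h1 ▸ h2) (h2 ▸ hjl)
      · subst h1; simp [h2]
      · subst h2; simp [h1]
      · simp [h1, h2]
    rw [Finset.sum_congr rfl fun p _ => hsplit p, Finset.sum_add_distrib,
      Finset.sum_ite_eq' Finset.univ j a, Finset.sum_ite_eq' Finset.univ l a]
    simp
  have bval : ∀ b : Bool, (if b then (1 : ℤ) else 0) = 0 ∨ (if b then (1 : ℤ) else 0) = 1 := by
    intro b; cases b <;> simp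
  by_cases hall : ∀ j, a j = 0
  · left
    intro v
    have h1 := hval v
    have h2 : (∑ j : Fin m, if v j then a j else 0) = 0 := by
      refine Finset.sum_eq_zero fun j _ => ?_
      rw [hall j]; simp
    rw [h2, zero_add, ← hv0] at h1
    cases hb : φ v i <;> cases hb' : φ (fun _ => false) i <;> simp [hb, hb'] at h1 ⊢
  · right
    push_neg at hall
    obtain ⟨j, hj⟩ := hall
    have hzero : ∀ l, l ≠ j → a l = 0 := by
      intro l hl
      by_contra hlne
      have c0 := bval (φ (fun _ => false) i)
      rw [hv0] at c0
      have cj := bval (φ (fun p => decide (p = j)) i)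
      rw [hvj j] at cj
      have cl := bval (φ (fun p => decide (p = l)) i)
      rw [hvj l] at cl
      have cjl := bval (φ (fun p => decide (p = j ∨ p = l)) i)
      rw [hpair j l (fun h => hl (h.symm ▸ rfl))] at cjl
      omega
    have hform : ∀ v, (if φ v i then (1 : ℤ) else 0) = (if v j then a j else 0) + t i := by
      intro v
      rw [hval v]
      congr 1
      have : ∀ l : Fin m, (if v l then a l else 0) =
          if l = j then (if v l then a l else 0) else 0 := by
        intro l
        by_cases hl : l = j
        · simp [hl]
        · simp [hl, hzero l hl]
      rw [Finset.sum_congr rfl fun l _ => this l,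
        Finset.sum_ite_eq' Finset.univ j (fun l => if v l then a l else 0)]
      simp
    have c0 := bval (φ (fun _ => false) i)
    rw [hv0] at c0
    have cj := bval (φ (fun p => decide (p = j)) i)
    rw [hvj j] at cj
    have hcase : (a j = 1 ∧ t i = 0) ∨ (a j = -1 ∧ t i = 1) := by omega
    refine ⟨j, ?_⟩
    rcases hcase with ⟨haj, hti⟩ | ⟨haj, hti⟩
    · left
      intro v
      have := hform v
      rw [haj, hti] at this
      cases hb : φ v i <;> cases hv : v j <;> simp [hb, hv] at this ⊢
    · right
      intro v
      have := hform v
      rw [haj, hti] at this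
      cases hb : φ v i <;> cases hv : v j <;> simp [hb, hv] at this ⊢

end Aux6
section Aux7
variable {G : Type*} [Group G]
open Classical

lemma preimage_constraint {m n : ℕ} {φ : (Fin m → Bool) → (Fin n → Bool)}
    (h : IsCubeMorphism φ) (i : Fin n) (ε : Bool) :
    φ ⁻¹' {v | v i = ε} = Set.univ ∨ φ ⁻¹' {v | v i = ε} = ∅ ∨
      IsFaceOfCodim (φ ⁻¹' {v | v i = ε}) 1 := by
  rcases cube_morphism_coord h i with hconst | ⟨j, hj | hj⟩
  · by_cases hε : φ (fun _ => false) i = ε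
    · left
      ext u
      simp [Set.mem_preimage, hconst u, hε]
    · right; left
      ext u
      simp only [Set.mem_preimage, Set.mem_setOf_eq, Set.mem_empty_iff_false, iff_false]
      rw [hconst u]
      exact hε
  · right; right
    have : φ ⁻¹' {v | v i = ε} = {u : Fin m → Bool | ∀ i' ∈ ({j} : Finset (Fin m)), u i' = ε} := by
      ext u
      simp [Set.mem_preimage, hj u]
    rw [this]
    exact ⟨{j}, fun _ => ε, Finset.card_singleton j, rfl⟩
  · right; right
    have : φ ⁻¹' {v | v i = ε} =
        {u : Fin m → Bool | ∀ i' ∈ ({j} : Finset (Fin m)), u i' = !ε} := by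
      ext u
      simp only [Set.mem_preimage, Set.mem_setOf_eq, hj u, Finset.mem_singleton,
        forall_eq]
      cases hu : u j <;> cases ε <;> simp
    rw [this]
    exact ⟨{j}, fun _ => !ε, Finset.card_singleton j, rfl⟩

lemma preimage_face {m n : ℕ} {φ : (Fin m → Bool) → (Fin n → Bool)}
    (h : IsCubeMorphism φ) (I : Finset (Fin n)) (x : Fin n → Bool) :
    φ ⁻¹' {v | ∀ i ∈ I, v i = x i} = ∅ ∨
      ∃ c' ≤ I.card, IsFaceOfCodim (φ ⁻¹' {v | ∀ i ∈ I, v i = x i}) c' := by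
  induction I using Finset.induction_on with
  | empty =>
    right
    refine ⟨0, le_rfl, ∅, fun _ => false, rfl, ?_⟩
    ext v
    simp
  | @insert a s ha ih =>
    have hsplit : {v : Fin n → Bool | ∀ i ∈ insert a s, v i = x i} =
        {v : Fin n → Bool | v a = x a} ∩ {v | ∀ i ∈ s, v i = x i} := by
      ext v
      simp [Finset.forall_mem_insert]
    rw [hsplit, Set.preimage_inter]
    rcases preimage_constraint h a (x a) with h1 | h1 | h1
    · rcases ih with h2 | ⟨c', hc', h2⟩
      · left; rw [h1, Set.univ_inter, h2]
      · right
        rw [h1, Set.univ_inter]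
        exact ⟨c', le_trans hc' (by rw [Finset.card_insert_of_notMem ha]; omega), h2⟩
    · left; rw [h1, Set.empty_inter]
    · rcases ih with h2 | ⟨c', hc', h2⟩
      · left; rw [h2, Set.inter_empty]
      · rcases face_inter h1 h2 with h3 | ⟨c'', hc'', h3⟩
        · left; exact h3
        · right
          exact ⟨c'', by rw [Finset.card_insert_of_notMem ha]; omega, h3⟩

lemma hk_comp {Gf : ℕ → Subgroup G} (hGf : IsGrpFiltration Gf) {m n : ℕ}
    {φ : (Fin m → Bool) → (Fin n → Bool)} (hφ : IsCubeMorphism φ)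
    {q : (Fin n → Bool) → G} (hq : q ∈ hkCubes Gf n) : (q ∘ φ) ∈ hkCubes Gf m := by
  revert hq
  have : hkCubes Gf n ≤ Subgroup.comap (precompHom (G := G) φ) (hkCubes Gf m) := by
    apply Subgroup.closure_le _ |>.2
    rintro f ⟨c, F, g, ⟨I, x, hcard, rfl⟩, hg, rfl⟩
    simp only [Subgroup.coe_comap, Set.mem_preimage, SetLike.mem_coe]
    have key : precompHom (G := G) φ (faceEl {v | ∀ i ∈ I, v i = x i} g) =
        faceEl (φ ⁻¹' {v | ∀ i ∈ I, v i = x i}) g := rfl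
    rw [key]
    rcases preimage_face hφ I x with h1 | ⟨c', hc', h1⟩
    · rw [h1, faceEl_empty]; exact one_mem _
    · exact faceEl_mem h1 (hGf.antitone (hcard ▸ hc') hg)
  intro hq; exact this hq

lemma hk_erg {Gf : ℕ → Subgroup G} (h0 : Gf 0 = ⊤) (h1 : Gf 1 = ⊤)
    (q : (Fin 1 → Bool) → G) : q ∈ hkCubes Gf 1 := by
  have huniv : IsFaceOfCodim (Set.univ : Set (Fin 1 → Bool)) 0 :=
    ⟨∅, fun _ => false, rfl, by ext v; simp⟩
  have hface : IsFaceOfCodim {v : Fin 1 → Bool | v 0 = true} 1 := by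
    refine ⟨{0}, fun _ => true, Finset.card_singleton _, ?_⟩
    ext v
    simp
  have key : q = faceEl Set.univ (q (fun _ => false)) *
      faceEl {v : Fin 1 → Bool | v 0 = true}
        ((q (fun _ => false))⁻¹ * q (fun _ => true)) := by
    funext v
    show q v = faceEl Set.univ (q (fun _ => false)) v *
      faceEl {v : Fin 1 → Bool | v 0 = true} _ v
    rw [faceEl_apply, faceEl_apply, if_pos (Set.mem_univ v)]
    cases h : v 0
    · have hv : v = (fun _ => false) := funext fun i => by rw [Fin.eq_zero i]; exact h
      rw [if_neg (by simp [Set.mem_setOf_eq, h]), hv, mul_one]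
    · have hv : v = (fun _ => true) := funext fun i => by rw [Fin.eq_zero i]; exact h
      rw [if_pos (by simp [Set.mem_setOf_eq, h]), hv]
      group
  rw [key]
  exact mul_mem (faceEl_mem huniv (by rw [h0]; trivial))
    (faceEl_mem hface (by rw [h1]; trivial))

end Aux7
theorem stmt6 {G : Type*} [Group G] (Gf : ℕ → Subgroup G) (hGf : IsGrpFiltration Gf)
    (h0 : Gf 0 = ⊤) (h1 : Gf 1 = ⊤) {k : ℕ} (hk : Gf (k + 1) = ⊥)
    (hmin : ∀ j : ℕ, Gf (j + 1) = ⊥ → k ≤ j) :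
    IsKStepNilspace (fun n q => q ∈ hkCubes Gf n) k := by
  have uniq_aux : ∀ (n : ℕ) (q q2 : (Fin (n + 1) → Bool) → G),
      Gf (n + 1) = ⊥ → q ∈ hkCubes Gf (n + 1) → q2 ∈ hkCubes Gf (n + 1) →
      (∀ v, v ≠ (fun _ => true) → q v = q2 v) → q2 = q := by
    intro n q q2 hbot hq hq2 hagree
    have he : q⁻¹ * q2 ∈ hkCubes Gf (n + 1) := mul_mem (inv_mem hq) hq2
    have hsupp : ∀ v, v ≠ (fun _ => true) → (q⁻¹ * q2) v = 1 := by
      intro v hv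
      show (q v)⁻¹ * q2 v = 1
      rw [← hagree v hv]
      group
    have htop := hk_top_support (n + 1) Gf hGf he hsupp
    rw [hbot, Subgroup.mem_bot] at htop
    have htop' : q2 (fun _ => true) = q (fun _ => true) := by
      have : (q (fun _ => true))⁻¹ * q2 (fun _ => true) = 1 := htop
      rw [inv_mul_eq_one] at this
      exact this.symm
    funext v
    by_cases hv : v = (fun _ => true)
    · rw [hv]; exact htop'
    · exact (hagree v hv).symm
  constructor
  · refine ⟨?_, ?_, ?_⟩
    · intro m n φ hφ q hq
      exact hk_comp hGf hφ hq
    · intro q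
      exact hk_erg h0 h1 q
    · intro n q' hcorner
      obtain ⟨q, hq, hagree⟩ := hk_completion n Gf hGf q' hcorner
      exact ⟨q, hq, hagree⟩
  · intro q' hcorner
    obtain ⟨q, hq, hagree⟩ := hk_completion k Gf hGf q' hcorner
    refine ⟨q, ⟨hq, hagree⟩, ?_⟩
    rintro q2 ⟨hq2, hagree2⟩
    refine uniq_aux k q q2 hk hq hq2 ?_
    intro v hv
    rw [hagree v hv, hagree2 v hv]
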